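/- If T is a trace-class operator on a separable Hilbert space H, and (U_k)_{k=1}^∞ is a sequence of isometries on H with mutually orthogonal ranges (i.e., U_j* U_k = 0 for j ≠ k), then the series ∑_{k=1}^∞ U_k* T U_k converges in trace-class norm to a trace-class operator. -/

import Mathlib

noncomputable section

open Filter ContinuousLinearMap

variable {H : Type*} [NormedAddCommGroup H] [InnerProductSpace ℂ H] [CompleteSpace H]

/-- The trace norm of a bounded operator on a Hilbert space, expressed as the supremum
over finite orthonormal families `(e i)`, `(f i)` of `∑ i, ‖⟪T (e i), f i⟫‖`. -/
noncomputable def traceNorm (T : H →L[ℂ] H) : ENNReal :=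
  ⨆ (m : ℕ) (e : Fin m → H) (f : Fin m → H) (_ : Orthonormal ℂ e) (_ : Orthonormal ℂ f),
    ∑ i, (‖(inner ℂ (T (e i)) (f i) : ℂ)‖₊ : ENNReal)

/-- A bounded operator is trace class if its trace norm is finite. -/
def IsTraceClass (T : H →L[ℂ] H) : Prop := traceNorm T < ⊤

structure ONP (H : Type*) [NormedAddCommGroup H] [InnerProductSpace ℂ H] where
  m : ℕ
  e : Fin m → H
  f : Fin m → H
  he : Orthonormal ℂ e
  hf : Orthonormal ℂ f

noncomputable def ONP.val (p : ONP H) (T : H →L[ℂ] H) : ENNReal :=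
  ∑ i, (‖(inner ℂ (T (p.e i)) (p.f i) : ℂ)‖₊ : ENNReal)

lemma orthonormal_fin_zero : Orthonormal ℂ (fun i : Fin 0 => (0 : H)) := by
  rw [orthonormal_iff_ite]; exact fun i => i.elim0

instance : Nonempty (ONP H) := ⟨⟨0, fun _ => 0, fun _ => 0, orthonormal_fin_zero, orthonormal_fin_zero⟩⟩

lemma traceNorm_eq_iSup (T : H →L[ℂ] H) : traceNorm T = ⨆ p : ONP H, p.val T := by
  apply le_antisymm
  · refine iSup_le fun m => iSup_le fun e => iSup_le fun f => iSup_le fun he => iSup_le fun hf => ?_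
    exact le_iSup (fun p : ONP H => p.val T) ⟨m, e, f, he, hf⟩
  · refine iSup_le fun p => ?_
    rw [ONP.val]
    calc (∑ i, (‖(inner ℂ (T (p.e i)) (p.f i) : ℂ)‖₊ : ENNReal)) ≤ ⨆ (_ : Orthonormal ℂ p.e) (_ : Orthonormal ℂ p.f),
        ∑ i, (‖(inner ℂ (T (p.e i)) (p.f i) : ℂ)‖₊ : ENNReal) := by
          rw [iSup_pos p.he, iSup_pos p.hf]
      _ ≤ traceNorm T :=
          le_iSup_of_le p.m (le_iSup_of_le p.e (le_iSup_of_le p.f le_rfl))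

lemma ONP.val_le_traceNorm (p : ONP H) (T : H →L[ℂ] H) : p.val T ≤ traceNorm T := by
  rw [traceNorm_eq_iSup]; exact le_iSup (fun p : ONP H => p.val T) p

lemma ONP.val_add_le (p : ONP H) (A B : H →L[ℂ] H) : p.val (A + B) ≤ p.val A + p.val B := by
  simp only [ONP.val]
  rw [← Finset.sum_add_distrib]
  refine Finset.sum_le_sum fun i _ => ?_
  rw [← ENNReal.coe_add, ENNReal.coe_le_coe]
  calc ‖(inner ℂ ((A + B) (p.e i)) (p.f i) : ℂ)‖₊
      = ‖(inner ℂ (A (p.e i)) (p.f i) : ℂ) + (inner ℂ (B (p.e i)) (p.f i) : ℂ)‖₊ := by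
        rw [ContinuousLinearMap.add_apply, inner_add_left]
    _ ≤ _ := nnnorm_add_le _ _

lemma traceNorm_add_le (A B : H →L[ℂ] H) : traceNorm (A + B) ≤ traceNorm A + traceNorm B := by
  rw [traceNorm_eq_iSup]
  exact iSup_le fun p => le_trans (p.val_add_le A B)
    (add_le_add (p.val_le_traceNorm A) (p.val_le_traceNorm B))

lemma traceNorm_zero : traceNorm (0 : H →L[ℂ] H) = 0 := by
  rw [traceNorm_eq_iSup]
  refine le_antisymm (iSup_le fun p => ?_) zero_le
  simp [ONP.val]

lemma traceNorm_sum_le {ι : Type*} (s : Finset ι) (A : ι → H →L[ℂ] H) :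
    traceNorm (∑ k ∈ s, A k) ≤ ∑ k ∈ s, traceNorm (A k) := by
  classical
  induction s using Finset.induction with
  | empty => simp [traceNorm_zero]
  | insert _ _ hk ih =>
    rename_i a s
    rw [Finset.sum_insert hk, Finset.sum_insert hk]
    exact le_trans (traceNorm_add_le _ _) (add_le_add le_rfl ih)

set_option linter.unusedSectionVars false
set_option maxHeartbeats 800000

lemma combined_le (T : H →L[ℂ] H) (U : ℕ → H →L[ℂ] H)
    (hiso : ∀ k, (ContinuousLinearMap.adjoint (U k)) ∘L (U k) = 1)
    (horth : ∀ j k, j ≠ k → (ContinuousLinearMap.adjoint (U j)) ∘L (U k) = 0)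
    (F : Finset ℕ) (p : ℕ → ONP H) :
    ∑ k ∈ F, (p k).val ((ContinuousLinearMap.adjoint (U k)) ∘L T ∘L (U k)) ≤ traceNorm T := by
  classical
  have hUU : ∀ k (x y : H), (inner ℂ (U k x) (U k y) : ℂ) = inner ℂ x y := by
    intro k x y
    have h := ContinuousLinearMap.adjoint_inner_left (U k) y (U k x)
    rw [← ContinuousLinearMap.comp_apply, hiso k] at h
    simpa using h.symm
  have hUU0 : ∀ j k, j ≠ k → ∀ (x y : H), (inner ℂ (U j x) (U k y) : ℂ) = 0 := by
    intro j k hjk x y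
    have h := ContinuousLinearMap.adjoint_inner_left (U j) x (U k y)
    rw [← ContinuousLinearMap.comp_apply, horth j k hjk] at h
    rw [inner_eq_zero_symm]
    simpa using h.symm
  let ι : Type _ := Σ k : {k // k ∈ F}, Fin ((p k.1).m)
  let E : ι → H := fun q => U q.1 ((p q.1.1).e q.2)
  let Fv : ι → H := fun q => U q.1 ((p q.1.1).f q.2)
  have horthE : ∀ (g : ∀ k : ℕ, Fin ((p k).m) → H),
      (∀ k, Orthonormal ℂ (g k)) → Orthonormal ℂ (fun q : ι => U q.1 (g q.1.1 q.2)) := by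
    intro g hg
    rw [orthonormal_iff_ite]
    rintro ⟨⟨j, hj⟩, a⟩ ⟨⟨k, hk⟩, b⟩
    by_cases hjk : j = k
    · subst hjk
      rw [hUU]
      have hg' := hg j
      rw [orthonormal_iff_ite] at hg'
      rw [hg' a b]
      by_cases hab : a = b
      · subst hab; simp [Sigma.ext_iff]
      · have hne : ¬((⟨⟨j, hj⟩, a⟩ : ι) = ⟨⟨j, hk⟩, b⟩) := by
          intro h
          injection h with h1 h2
          exact hab h2
        rw [if_neg hne, if_neg hab]
    · rw [hUU0 j k hjk]
      have hne : (⟨⟨j, hj⟩, a⟩ : ι) ≠ ⟨⟨k, hk⟩, b⟩ := by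
        simp [Sigma.ext_iff, Subtype.ext_iff, hjk]
      simp [hne]
  have hE : Orthonormal ℂ E := horthE (fun k => (p k).e) (fun k => (p k).he)
  have hF : Orthonormal ℂ Fv := horthE (fun k => (p k).f) (fun k => (p k).hf)
  let n := Fintype.card ι
  let σ : ι ≃ Fin n := Fintype.equivFin ι
  have key : ∑ q : ι, (‖(inner ℂ (T (E q)) (Fv q) : ℂ)‖₊ : ENNReal) ≤ traceNorm T := by
    calc ∑ q : ι, (‖(inner ℂ (T (E q)) (Fv q) : ℂ)‖₊ : ENNReal)
        = ∑ i : Fin n, (‖(inner ℂ (T (E (σ.symm i))) (Fv (σ.symm i)) : ℂ)‖₊ : ENNReal) :=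
          (Equiv.sum_comp σ.symm (fun q : ι => (‖(inner ℂ (T (E q)) (Fv q) : ℂ)‖₊ : ENNReal))).symm
      _ ≤ traceNorm T := ONP.val_le_traceNorm
          ⟨n, E ∘ σ.symm, Fv ∘ σ.symm, hE.comp _ σ.symm.injective, hF.comp _ σ.symm.injective⟩ T
  refine le_trans (le_of_eq ?_) key
  rw [← Finset.sum_coe_sort F
    (fun k => (p k).val ((ContinuousLinearMap.adjoint (U k)) ∘L T ∘L (U k)))]
  rw [← Finset.univ_sigma_univ (ι := {k // k ∈ F}) (κ := fun k => Fin ((p k.1).m)),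
    Finset.sum_sigma]
  refine Finset.sum_congr rfl fun a _ => ?_
  rw [ONP.val]
  refine Finset.sum_congr rfl fun b _ => ?_
  congr 1
  rw [ContinuousLinearMap.comp_apply, ContinuousLinearMap.comp_apply,
    ContinuousLinearMap.adjoint_inner_left]

lemma orthonormal_single {x : H} (hx : ‖x‖ = 1) : Orthonormal ℂ (fun _ : Fin 1 => x) := by
  rw [orthonormal_iff_ite]
  intro i j
  rw [Subsingleton.elim i j, if_pos rfl, inner_self_eq_norm_sq_to_K, hx]
  norm_num

lemma nnnorm_le_traceNorm (A : H →L[ℂ] H) : (‖A‖₊ : ENNReal) ≤ traceNorm A := by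
  rcases eq_or_ne (traceNorm A) ⊤ with h | h
  · simp [h]
  have hx1 : ∀ x : H, ‖x‖ = 1 → (‖A x‖₊ : ENNReal) ≤ traceNorm A := by
    intro x hx
    rcases eq_or_ne (A x) 0 with h0 | h0
    · simp [h0]
    · set f : H := ((‖A x‖ : ℂ))⁻¹ • A x with hfdef
      have hAx : ‖A x‖ ≠ 0 := norm_ne_zero_iff.mpr h0
      have hf : ‖f‖ = 1 := by
        rw [hfdef, norm_smul, norm_inv, Complex.norm_real, Real.norm_eq_abs,
          abs_of_nonneg (norm_nonneg _), inv_mul_cancel₀ hAx]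
      have hval := ONP.val_le_traceNorm ⟨1, fun _ => x, fun _ => f, orthonormal_single hx,
        orthonormal_single hf⟩ A
      rw [ONP.val, Fin.sum_univ_one] at hval
      have hnn : ‖(inner ℂ (A x) f : ℂ)‖₊ = ‖A x‖₊ := by
        have hthis : ‖(inner ℂ (A x) f : ℂ)‖ = ‖A x‖ := by
          rw [hfdef, inner_smul_right, norm_mul, norm_inv, Complex.norm_real,
            Real.norm_eq_abs, abs_of_nonneg (norm_nonneg _), inner_self_eq_norm_sq_to_K,
            norm_pow, RCLike.norm_ofReal, abs_of_nonneg (norm_nonneg _)]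
          field_simp
        ext
        exact hthis
      rwa [hnn] at hval
  have hop : ‖A‖ ≤ (traceNorm A).toReal := by
    refine ContinuousLinearMap.opNorm_le_bound A ENNReal.toReal_nonneg fun x => ?_
    rcases eq_or_ne x 0 with rfl | hx0
    · simp
    · have hxn : ‖x‖ ≠ 0 := norm_ne_zero_iff.mpr hx0
      set y : H := ((‖x‖ : ℂ))⁻¹ • x with hydef
      have hy : ‖y‖ = 1 := by
        rw [hydef, norm_smul, norm_inv, Complex.norm_real, Real.norm_eq_abs,
          abs_of_nonneg (norm_nonneg _), inv_mul_cancel₀ hxn]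
      have h1 := hx1 y hy
      have h2 : ‖A y‖ ≤ (traceNorm A).toReal := by
        have := ENNReal.toReal_mono h h1
        simpa using this
      have hAy : ‖A y‖ = ‖x‖⁻¹ * ‖A x‖ := by
        rw [hydef, map_smul, norm_smul, norm_inv, Complex.norm_real, Real.norm_eq_abs,
          abs_of_nonneg (norm_nonneg _)]
      rw [hAy] at h2
      calc ‖A x‖ = (‖x‖⁻¹ * ‖A x‖) * ‖x‖ := by field_simp
        _ ≤ (traceNorm A).toReal * ‖x‖ := by
            exact mul_le_mul_of_nonneg_right h2 (norm_nonneg _)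
  rw [← ENNReal.ofReal_toReal h, ← ENNReal.ofReal_coe_nnreal, coe_nnnorm]
  exact ENNReal.ofReal_le_ofReal hop

lemma sum_traceNorm_conj_le (T : H →L[ℂ] H) (U : ℕ → H →L[ℂ] H)
    (hiso : ∀ k, (ContinuousLinearMap.adjoint (U k)) ∘L (U k) = 1)
    (horth : ∀ j k, j ≠ k → (ContinuousLinearMap.adjoint (U j)) ∘L (U k) = 0)
    (F : Finset ℕ) :
    ∑ k ∈ F, traceNorm ((ContinuousLinearMap.adjoint (U k)) ∘L T ∘L (U k)) ≤ traceNorm T := by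
  classical
  have hsingle : ∀ k, traceNorm ((ContinuousLinearMap.adjoint (U k)) ∘L T ∘L (U k)) ≤
      traceNorm T := by
    intro k
    rw [traceNorm_eq_iSup]
    refine iSup_le fun p => ?_
    have h := combined_le T U hiso horth {k} (fun _ => p)
    simpa using h
  refine ENNReal.le_of_forall_pos_le_add fun ε hε htop => ?_
  rcases Finset.eq_empty_or_nonempty F with rfl | hF
  · simp
  have hcard0 : (F.card : ENNReal) ≠ 0 := by
    simp [Finset.card_ne_zero_of_mem (hF.choose_spec)]
  set δ : ENNReal := (ε : ENNReal) / F.card with hδdef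
  have hδ : δ ≠ 0 := ENNReal.div_ne_zero.mpr ⟨by exact_mod_cast hε.ne', ENNReal.natCast_ne_top _⟩
  have hchoice : ∀ k, ∃ p : ONP H,
      traceNorm ((ContinuousLinearMap.adjoint (U k)) ∘L T ∘L (U k)) ≤
        p.val ((ContinuousLinearMap.adjoint (U k)) ∘L T ∘L (U k)) + δ := by
    intro k
    rcases eq_or_ne (traceNorm ((ContinuousLinearMap.adjoint (U k)) ∘L T ∘L (U k))) 0 with h0 | h0
    · exact ⟨Classical.arbitrary _, by rw [h0]; exact zero_le⟩
    · have hne : traceNorm ((ContinuousLinearMap.adjoint (U k)) ∘L T ∘L (U k)) ≠ ⊤ :=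
        (lt_of_le_of_lt (hsingle k) htop).ne
      have hlt : traceNorm ((ContinuousLinearMap.adjoint (U k)) ∘L T ∘L (U k)) - δ <
          traceNorm ((ContinuousLinearMap.adjoint (U k)) ∘L T ∘L (U k)) :=
        ENNReal.sub_lt_self hne h0 hδ
      obtain ⟨p, hp⟩ := lt_iSup_iff.mp (lt_of_lt_of_le hlt (le_of_eq (traceNorm_eq_iSup _)))
      exact ⟨p, tsub_le_iff_right.mp hp.le⟩
  choose p hp using hchoice
  calc ∑ k ∈ F, traceNorm ((ContinuousLinearMap.adjoint (U k)) ∘L T ∘L (U k))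
      ≤ ∑ k ∈ F, ((p k).val ((ContinuousLinearMap.adjoint (U k)) ∘L T ∘L (U k)) + δ) :=
        Finset.sum_le_sum fun k _ => hp k
    _ = (∑ k ∈ F, (p k).val ((ContinuousLinearMap.adjoint (U k)) ∘L T ∘L (U k))) + F.card • δ := by
        rw [Finset.sum_add_distrib, Finset.sum_const]
    _ ≤ traceNorm T + ε := by
        refine add_le_add (combined_le T U hiso horth F p) ?_
        rw [nsmul_eq_mul, hδdef]
        exact ENNReal.mul_div_le


/-- If `T` is trace class and `(U k)` is a sequence of isometries with mutually orthogonal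
ranges, then `∑ k, (U k)* T (U k)` converges in trace norm to a trace-class operator. -/
theorem tsum_conj_isometries_traceClass
    [TopologicalSpace.SeparableSpace H]
    (T : H →L[ℂ] H) (hT : IsTraceClass T)
    (U : ℕ → H →L[ℂ] H)
    (hiso : ∀ k, (ContinuousLinearMap.adjoint (U k)) ∘L (U k) = 1)
    (horth : ∀ j k, j ≠ k → (ContinuousLinearMap.adjoint (U j)) ∘L (U k) = 0) :
    ∃ S : H →L[ℂ] H, IsTraceClass S ∧
      Tendsto
        (fun N => traceNorm (S - ∑ k ∈ Finset.range N,
          (ContinuousLinearMap.adjoint (U k)) ∘L T ∘L (U k)))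
        atTop (nhds 0) := by
  classical
  set a : ℕ → ENNReal := fun k =>
    traceNorm ((ContinuousLinearMap.adjoint (U k)) ∘L T ∘L (U k)) with ha
  have hsum : ∑' k, a k ≤ traceNorm T := by
    rw [ENNReal.tsum_eq_iSup_sum]
    exact iSup_le fun F => sum_traceNorm_conj_le T U hiso horth F
  have htt : ∑' k, a k ≠ ⊤ := (lt_of_le_of_lt hsum hT).ne
  set t : ℕ → ENNReal := fun N => ∑' k, a (k + N) with htdef
  have htanti : ∀ N M, N ≤ M → t M ≤ t N := by
    intro N M hNM
    refine Summable.tsum_le_tsum_of_inj (fun k => k + (M - N)) (add_left_injective _)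
      (fun c _ => zero_le) (fun j => le_of_eq (congrArg a (show j + M = j + (M - N) + N by omega)))
      ENNReal.summable ENNReal.summable
  have ht0 : t 0 = ∑' k, a k := by simp [htdef]
  have htN_le : ∀ N, t N ≤ ∑' k, a k := fun N => ht0 ▸ htanti 0 N (Nat.zero_le N)
  have htN_ne : ∀ N, t N ≠ ⊤ := fun N => (lt_of_le_of_lt (htN_le N) (lt_of_le_of_lt hsum hT)).ne
  have htend : Tendsto t atTop (nhds 0) := ENNReal.tendsto_sum_nat_add a htt
  set Sseq : ℕ → H →L[ℂ] H := fun N => ∑ k ∈ Finset.range N,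
    (ContinuousLinearMap.adjoint (U k)) ∘L T ∘L (U k) with hSseq
  have hdiff : ∀ N M, N ≤ M → traceNorm (Sseq M - Sseq N) ≤ t N := by
    intro N M h
    have hEq : Sseq M - Sseq N = ∑ k ∈ Finset.Ico N M,
        (ContinuousLinearMap.adjoint (U k)) ∘L T ∘L (U k) := by
      rw [hSseq]
      exact (Finset.sum_Ico_eq_sub _ h).symm
    rw [hEq]
    calc traceNorm (∑ k ∈ Finset.Ico N M, (ContinuousLinearMap.adjoint (U k)) ∘L T ∘L (U k))
        ≤ ∑ k ∈ Finset.Ico N M, a k := traceNorm_sum_le _ _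
      _ = ∑ j ∈ Finset.range (M - N), a (N + j) := Finset.sum_Ico_eq_sum_range _ _ _
      _ = ∑ j ∈ Finset.range (M - N), a (j + N) := by
          exact Finset.sum_congr rfl fun j _ => congrArg a (add_comm N j)
      _ ≤ t N := ENNReal.sum_le_tsum _
  have hb0 : Tendsto (fun N => (t N).toReal) atTop (nhds 0) := by
    have h := (ENNReal.tendsto_toReal (a := 0) (by simp)).comp htend
    simpa [Function.comp_def] using h
  have hgen : ∀ n m N : ℕ, N ≤ n → n ≤ m → dist (Sseq n) (Sseq m) ≤ (t N).toReal := by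
    intro n m N hn hnm
    rw [dist_eq_norm, norm_sub_rev]
    have h1 : (‖Sseq m - Sseq n‖₊ : ENNReal) ≤ t N :=
      le_trans (nnnorm_le_traceNorm _) (le_trans (hdiff n m hnm) (htanti N n hn))
    have h2 := ENNReal.toReal_mono (htN_ne N) h1
    simpa using h2
  have hcauchy : CauchySeq Sseq := by
    refine cauchySeq_of_le_tendsto_0 (fun N => (t N).toReal) ?_ hb0
    intro n m N hn hm
    rcases le_total n m with h | h
    · exact hgen n m N hn h
    · rw [dist_comm]
      exact hgen m n N hm h
  obtain ⟨S, hS⟩ := cauchySeq_tendsto_of_complete hcauchy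
  have hval_ofReal : ∀ (A : H →L[ℂ] H) (p : ONP H),
      p.val A = ENNReal.ofReal (∑ i, ‖(inner ℂ (A (p.e i)) (p.f i) : ℂ)‖) := by
    intro A p
    rw [ONP.val, ENNReal.ofReal_sum_of_nonneg (fun i _ => norm_nonneg _)]
    exact Finset.sum_congr rfl fun i _ => by rw [← ENNReal.ofReal_coe_nnreal, coe_nnnorm]
  have hlsc : ∀ N, traceNorm (S - Sseq N) ≤ t N := by
    intro N
    rw [traceNorm_eq_iSup]
    refine iSup_le fun p => ?_
    have hcontA : ∀ i : Fin p.m, Continuous fun A : H →L[ℂ] H =>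
        ‖(inner ℂ ((A - Sseq N) (p.e i)) (p.f i) : ℂ)‖ := by
      intro i
      have h1 : Continuous fun A : H →L[ℂ] H => (A - Sseq N) (p.e i) := by
        simp only [ContinuousLinearMap.sub_apply]
        exact ((ContinuousLinearMap.apply ℂ H (p.e i)).continuous).sub continuous_const
      exact (h1.inner continuous_const).norm
    have hvm : Tendsto (fun M => ∑ i, ‖(inner ℂ ((Sseq M - Sseq N) (p.e i)) (p.f i) : ℂ)‖) atTop
        (nhds (∑ i, ‖(inner ℂ ((S - Sseq N) (p.e i)) (p.f i) : ℂ)‖)) := by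
      refine tendsto_finset_sum _ fun i _ => ?_
      exact (((hcontA i).tendsto S)).comp hS
    have hub : ∀ M, M ≥ N → ∑ i, ‖(inner ℂ ((Sseq M - Sseq N) (p.e i)) (p.f i) : ℂ)‖ ≤
        (t N).toReal := by
      intro M hM
      have h1 : p.val (Sseq M - Sseq N) ≤ t N :=
        le_trans (p.val_le_traceNorm _) (hdiff N M hM)
      rw [hval_ofReal] at h1
      have h2 := ENNReal.toReal_mono (htN_ne N) h1
      rwa [ENNReal.toReal_ofReal (Finset.sum_nonneg fun i _ => norm_nonneg _)] at h2
    have hle : ∑ i, ‖(inner ℂ ((S - Sseq N) (p.e i)) (p.f i) : ℂ)‖ ≤ (t N).toReal :=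
      le_of_tendsto hvm (eventually_atTop.mpr ⟨N, hub⟩)
    rw [hval_ofReal]
    calc ENNReal.ofReal (∑ i, ‖(inner ℂ ((S - Sseq N) (p.e i)) (p.f i) : ℂ)‖)
        ≤ ENNReal.ofReal (t N).toReal := ENNReal.ofReal_le_ofReal hle
      _ = t N := ENNReal.ofReal_toReal (htN_ne N)
  refine ⟨S, ?_, ?_⟩
  · have h0 : Sseq 0 = 0 := by simp [hSseq]
    have : traceNorm S ≤ t 0 := by
      have := hlsc 0
      rwa [h0, sub_zero] at this
    exact lt_of_le_of_lt this (lt_of_le_of_lt (le_trans (htN_le 0) hsum) hT)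
  · exact tendsto_of_tendsto_of_tendsto_of_le_of_le tendsto_const_nhds htend
      (fun N => zero_le) hlsc
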